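/- Let Σ be a (d−1)-dimensional normal pseudomanifold with a linearly generic d-dimensional subspace M ⊆ K[Σ]^1, and let γ be a (d−m−1)-dimensional face of Σ. Then every element x of the degree-m part of A^*(Σ) = K[Σ]/(M) can be written as a K-linear combination of squarefree monomials x_η, where each η is an (m−1)-dimensional face of Σ disjoint from γ. -/

import Mathlib

open MvPolynomial

set_option synthInstance.maxHeartbeats 1000000
set_option maxHeartbeats 1000000

/-- A simplicial complex on a vertex type `V`: a nonempty, downward closed
collection of finite subsets of `V`. -/
structure SComplex (V : Type*) [DecidableEq V] where
  faces : Finset (Finset V)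
  nonempty : faces.Nonempty
  down_closed : ∀ σ ∈ faces, ∀ τ ⊆ σ, τ ∈ faces

namespace SComplex

variable {V : Type*} [DecidableEq V]

theorem empty_mem (Δ : SComplex V) : (∅ : Finset V) ∈ Δ.faces := by
  obtain ⟨σ, hσ⟩ := Δ.nonempty
  exact Δ.down_closed σ hσ ∅ (Finset.empty_subset σ)

/-- The Stanley–Reisner ideal of a simplicial complex: generated by the
squarefree monomials `x_S` for non-faces `S`. -/
noncomputable def SRideal (K : Type*) [Field K] (Δ : SComplex V) : Ideal (MvPolynomial V K) :=
  Ideal.span { p | ∃ S : Finset V, S ∉ Δ.faces ∧ p = ∏ v ∈ S, X v }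

/-- The set of `d`-element faces ("facets" of a `(d-1)`-dimensional complex). -/
def facets (Δ : SComplex V) (d : ℕ) : Finset (Finset V) :=
  Δ.faces.filter fun σ => σ.card = d

/-- Purity: every face is contained in a `d`-element face. -/
def Pure (Δ : SComplex V) (d : ℕ) : Prop :=
  ∀ σ ∈ Δ.faces, ∃ τ ∈ Δ.faces, σ ⊆ τ ∧ τ.card = d

/-- Two facets are adjacent if they share a `(d-1)`-element face. -/
def Adj (Δ : SComplex V) (d : ℕ) (σ σ' : Finset V) : Prop :=
  σ ∈ facets Δ d ∧ σ' ∈ facets Δ d ∧ (σ ∩ σ').card = d - 1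

/-- Strong connectivity: any two facets are joined by a face path. -/
def StronglyConnected (Δ : SComplex V) (d : ℕ) : Prop :=
  ∀ σ ∈ facets Δ d, ∀ σ' ∈ facets Δ d, Relation.ReflTransGen (Adj Δ d) σ σ'

/-- A `(d-1)`-dimensional pseudomanifold (without boundary): pure, every
`(d-2)`-face lies in exactly two facets, and strongly connected. -/
def IsPseudomanifold (Δ : SComplex V) (d : ℕ) : Prop :=
  Pure Δ d ∧
  (∀ τ ∈ Δ.faces, τ.card = d - 1 → ((facets Δ d).filter fun σ => τ ⊆ σ).card = 2) ∧
  StronglyConnected Δ d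

/-- The link of a face. -/
def link (Δ : SComplex V) (τ : Finset V) (h : τ ∈ Δ.faces) : SComplex V where
  faces := Δ.faces.filter fun σ => Disjoint σ τ ∧ σ ∪ τ ∈ Δ.faces
  nonempty := ⟨∅, by
    simp only [Finset.mem_filter]
    exact ⟨Δ.empty_mem, Finset.disjoint_empty_left τ, by simpa using h⟩⟩
  down_closed := by
    intro σ hσ ρ hρ
    simp only [Finset.mem_filter] at hσ ⊢
    exact ⟨Δ.down_closed σ hσ.1 ρ hρ, hσ.2.1.mono_left hρ,
      Δ.down_closed _ hσ.2.2 _ (Finset.union_subset_union hρ le_rfl)⟩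

/-- Graph connectivity of a complex: there is a vertex and any two vertices
are joined by an edge path. -/
def Connected (Δ : SComplex V) : Prop :=
  (∃ v, {v} ∈ Δ.faces) ∧
  ∀ u w : V, {u} ∈ Δ.faces → {w} ∈ Δ.faces →
    Relation.ReflTransGen (fun x y => ({x, y} : Finset V) ∈ Δ.faces) u w

/-- A normal pseudomanifold: a pseudomanifold all of whose links of faces of
codimension at least two are connected. -/
def IsNormalPM (Δ : SComplex V) (d : ℕ) : Prop :=
  IsPseudomanifold Δ d ∧
  ∀ τ (h : τ ∈ Δ.faces), τ.card + 2 ≤ d → Connected (Δ.link τ h)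

/-- The star of a vertex, as a simplicial complex (on the same ambient
vertex type). -/
def starComplex (Δ : SComplex V) (v : V) (hv : {v} ∈ Δ.faces) : SComplex V where
  faces := Δ.faces.filter fun τ => insert v τ ∈ Δ.faces
  nonempty := ⟨∅, by
    simp only [Finset.mem_filter]
    exact ⟨Δ.empty_mem, by simpa using hv⟩⟩
  down_closed := by
    intro σ hσ ρ hρ
    simp only [Finset.mem_filter] at hσ ⊢
    exact ⟨Δ.down_closed σ hσ.1 ρ hρ,
      Δ.down_closed _ hσ.2 _ (Finset.insert_subset_insert v hρ)⟩

end SComplex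

section Chains

variable {V : Type*} [DecidableEq V] [Fintype V] [LinearOrder V]
variable (K : Type*) [Field K]

/-- `m`-dimensional chains: functions on faces with `m` elements. -/
def chainsp (Δ : SComplex V) (m : ℕ) : Type _ :=
  {σ : Finset V // σ ∈ Δ.faces ∧ σ.card = m} → K

noncomputable instance (Δ : SComplex V) (m : ℕ) : AddCommGroup (chainsp K Δ m) :=
  Pi.addCommGroup

noncomputable instance (Δ : SComplex V) (m : ℕ) : Module K (chainsp K Δ m) :=
  Pi.module _ _ _

/-- The simplicial boundary map of the (augmented) chain complex, using the
orderings induced by the linear order on `V` and the usual incidence signs. -/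
noncomputable def bdry (Δ : SComplex V) (m : ℕ) :
    chainsp K Δ (m + 1) →ₗ[K] chainsp K Δ m where
  toFun f τ := ∑ v : V,
    if h : v ∉ τ.1 ∧ insert v τ.1 ∈ Δ.faces then
      (-1 : K) ^ ((insert v τ.1).filter fun u => u < v).card *
        f ⟨insert v τ.1, h.2, by rw [Finset.card_insert_of_notMem h.1, τ.2.2]⟩
    else 0
  map_add' f g := by
    funext τ
    show _ = (_ : K) + _
    rw [← Finset.sum_add_distrib]
    refine Finset.sum_congr rfl fun v _ => ?_
    split
    · show _ * ((f _ : K) + g _) = _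
      ring
    · simp
  map_smul' c f := by
    funext τ
    show _ = c * _
    rw [Finset.mul_sum]
    refine Finset.sum_congr rfl fun v _ => ?_
    split
    · show _ * (c * (f _ : K)) = _
      ring
    · simp

/-- The cycles in degree `m` (everything in degree `0`, which is the span of
the empty face in the augmented complex). -/
noncomputable def kerAt (Δ : SComplex V) :
    (m : ℕ) → Submodule K (chainsp K Δ m)
  | 0 => ⊤
  | m + 1 => LinearMap.ker (bdry K Δ m)

/-- The complex has the reduced `K`-homology of an `(n-1)`-dimensional sphere:
it is at most `(n-1)`-dimensional, reduced homology vanishes below the top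
degree, and the top reduced homology is one-dimensional. -/
def HomologySphereShape (Δ : SComplex V) (n : ℕ) : Prop :=
  (∀ σ ∈ Δ.faces, σ.card ≤ n) ∧
  (∀ m < n, kerAt K Δ m = LinearMap.range (bdry K Δ m)) ∧
  Module.finrank K (kerAt K Δ n) =
    Module.finrank K (LinearMap.range (bdry K Δ n)) + 1

/-- A `K`-homology sphere of dimension `d-1`: the complex and all links of
its nonempty faces have the reduced `K`-homology of spheres of the
appropriate dimensions. -/
def IsKHomologySphere (Δ : SComplex V) (d : ℕ) : Prop :=
  HomologySphereShape K Δ d ∧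
  ∀ τ (h : τ ∈ Δ.faces), τ.Nonempty →
    HomologySphereShape K (Δ.link τ h) (d - τ.card)

end Chains

section Linear

variable {V : Type*} [DecidableEq V]
variable (K : Type*) [Field K]

/-- The coefficient of `x_v`, as a linear functional on polynomials. -/
noncomputable def coeffLin (v : V) : MvPolynomial V K →ₗ[K] K where
  toFun p := coeff (Finsupp.single v 1) p
  map_add' p q := coeff_add _ p q
  map_smul' c p := coeff_smul _ c p

/-- `M` is a linearly generic `n`-dimensional subspace of the degree one part:
any at most `n` vertices have linearly independent images in `M^∨`. -/
def LinGenericM [Fintype V] (n : ℕ) (M : Submodule K (MvPolynomial V K)) : Prop :=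
  M ≤ Submodule.span K (Set.range (X : V → MvPolynomial V K)) ∧
  Module.finrank K M = n ∧
  ∀ S : Finset V, S.card ≤ n →
    LinearIndependent K fun v : ↥S => ((coeffLin K v.1).comp M.subtype)

set_option synthInstance.maxHeartbeats 1000000 in
/-- A regular parameter space: an `n`-dimensional subspace of the degree one
part containing a length `n` regular sequence for the Stanley–Reisner ring. -/
def RegularParamSpace [Fintype V] (Δ : SComplex V) (n : ℕ)
    (M : Submodule K (MvPolynomial V K)) : Prop :=
  M ≤ Submodule.span K (Set.range (X : V → MvPolynomial V K)) ∧
  Module.finrank K M = n ∧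
  ∃ ℓ : Fin n → MvPolynomial V K, (∀ i, ℓ i ∈ M) ∧
    RingTheory.Sequence.IsRegular (MvPolynomial V K ⧸ SComplex.SRideal K Δ)
      (List.ofFn fun i => Ideal.Quotient.mk (SComplex.SRideal K Δ) (ℓ i))

/-- Linear genericity of a system of coordinates `a : V → K^d`: the images of
any at most `d` vertices are linearly independent. -/
def LinGeneric [Fintype V] (d : ℕ) (a : V → Fin d → K) : Prop :=
  ∀ S : Finset V, S.card ≤ d → LinearIndependent K fun v : ↥S => a v.1

end Linear
section Cone

variable {V : Type*} [DecidableEq V]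

namespace SComplex

/-- The cone over a complex, with apex the new vertex `none`. -/
def coneC (Δ : SComplex V) : SComplex (Option V) where
  faces := (Δ.faces.image (Finset.image some)) ∪
    (Δ.faces.image fun σ => insert none (σ.image some))
  nonempty := ⟨∅, by
    simp only [Finset.mem_union, Finset.mem_image]
    exact Or.inl ⟨∅, Δ.empty_mem, rfl⟩⟩
  down_closed := by
    intro σ hσ ρ hρ
    simp only [Finset.mem_union, Finset.mem_image] at hσ ⊢
    have key : ∃ τ ∈ Δ.faces, ρ.erase none = τ.image some := by
      obtain ⟨τ₀, hτ₀, rfl⟩ | ⟨τ₀, hτ₀, rfl⟩ := hσ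
      · have : ρ.erase none ⊆ τ₀.image some :=
          (Finset.erase_subset none ρ).trans hρ
        obtain ⟨τ, hττ, hτ⟩ := Finset.subset_image_iff.mp this
        exact ⟨τ, Δ.down_closed τ₀ hτ₀ τ hττ, hτ.symm⟩
      · have : ρ.erase none ⊆ τ₀.image some := by
          intro x hx
          rcases Finset.mem_erase.mp hx with ⟨hx1, hx2⟩
          rcases Finset.mem_insert.mp (hρ hx2) with h | h
          · exact absurd h hx1
          · exact h
        obtain ⟨τ, hττ, hτ⟩ := Finset.subset_image_iff.mp this
        exact ⟨τ, Δ.down_closed τ₀ hτ₀ τ hττ, hτ.symm⟩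
    obtain ⟨τ, hτ, hρτ⟩ := key
    by_cases hn : none ∈ ρ
    · refine Or.inr ⟨τ, hτ, ?_⟩
      rw [← hρτ, Finset.insert_erase hn]
    · refine Or.inl ⟨τ, hτ, ?_⟩
      rw [← hρτ, Finset.erase_eq_self.mpr hn]

/-- The suspension of a complex on `V`, with poles `Sum.inr true` and
`Sum.inr false`: faces are the sets whose `V`-part is a face and which do not
contain both poles. -/
def susp [Fintype V] (Δ : SComplex V) : SComplex (V ⊕ Bool) where
  faces := Finset.univ.filter fun σ : Finset (V ⊕ Bool) =>
    σ.toLeft ∈ Δ.faces ∧ ¬(Sum.inr true ∈ σ ∧ Sum.inr false ∈ σ)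
  nonempty := ⟨∅, by
    simp only [Finset.mem_filter, Finset.mem_univ, true_and]
    exact ⟨by convert Δ.empty_mem using 1; ext x; simp [Finset.mem_toLeft], by simp⟩⟩
  down_closed := by
    intro σ hσ ρ hρ
    simp only [Finset.mem_filter, Finset.mem_univ, true_and] at hσ ⊢
    constructor
    · refine Δ.down_closed _ hσ.1 _ ?_
      intro x hx
      rw [Finset.mem_toLeft] at hx ⊢
      exact hρ hx
    · intro ⟨h1, h2⟩
      exact hσ.2 ⟨hρ h1, hρ h2⟩

end SComplex

end Cone

section Orientation

variable {V : Type*} [DecidableEq V] [LinearOrder V]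
variable (K : Type*) [Field K]

/-- The incidence sign of a vertex in a face, relative to the sorted order. -/
def incSign (σ : Finset V) (v : V) : ℤ :=
  (-1) ^ (σ.filter fun u => u < v).card

/-- An orientation of a `(d-1)`-dimensional pseudomanifold: a choice of sign
for each facet such that the two facets containing any `(d-2)`-face induce
opposite orientations on it. -/
def IsOrientation (Δ : SComplex V) (d : ℕ) (ε : Finset V → ℤ) : Prop :=
  (∀ σ ∈ SComplex.facets Δ d, ε σ = 1 ∨ ε σ = -1) ∧
  ∀ τ ∈ Δ.faces, τ.card = d - 1 →
    ∀ σ₁ ∈ SComplex.facets Δ d, ∀ σ₂ ∈ SComplex.facets Δ d, σ₁ ≠ σ₂ →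
      τ ⊆ σ₁ → τ ⊆ σ₂ → ∀ v₁ ∈ σ₁ \ τ, ∀ v₂ ∈ σ₂ \ τ,
        ε σ₁ * incSign σ₁ v₁ = -(ε σ₂ * incSign σ₂ v₂)

/-- The oriented determinant `[σ]` of a facet: the determinant of the matrix
of coordinates of its vertices (listed in increasing order), multiplied by
the orientation sign. -/
noncomputable def obrack (d : ℕ) (ε : Finset V → ℤ) (a : V → Fin d → K)
    (σ : Finset V) : K :=
  if h : σ.card = d then
    (ε σ : K) * Matrix.det (Matrix.of fun i j : Fin d => a (σ.orderIsoOfFin h j) i)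
  else 0

/-- The linear form `[σ_v]`, as a polynomial in the coordinates on `N`:
the determinant of the coordinate matrix of `σ` with the column of `v`
replaced by the variable vector, multiplied by the orientation sign. -/
noncomputable def obrackVar (d : ℕ) (ε : Finset V → ℤ) (a : V → Fin d → K)
    (σ : Finset V) (v : V) : MvPolynomial (Fin d) K :=
  if h : σ.card = d then
    (ε σ : MvPolynomial (Fin d) K) *
      Matrix.det (Matrix.of fun i j : Fin d =>
        if (σ.orderIsoOfFin h j : V) = v then X i
        else C (a (σ.orderIsoOfFin h j) i))
  else 0

variable (d : ℕ) (ε : Finset V → ℤ) (a : V → Fin d → K)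

/-- The field of rational functions on `N`. -/
abbrev RatFun := FractionRing (MvPolynomial (Fin d) K)

/-- Polynomials on `N` as rational functions. -/
noncomputable def toF : MvPolynomial (Fin d) K →+* RatFun K d :=
  algebraMap (MvPolynomial (Fin d) K) (RatFun K d)

/-- Restriction of an element of the Stanley–Reisner polynomial ring to (the
span of) a facet `σ`, via the Courant functions `Ψ_v = [σ_v]/[σ]`. -/
noncomputable def restrictF (σ : Finset V) (f : MvPolynomial V K) : RatFun K d :=
  MvPolynomial.eval₂ ((toF K d).comp (C : K →+* MvPolynomial (Fin d) K))
    (fun v => toF K d (obrackVar K d ε a σ v) / toF K d (C (obrack K d ε a σ))) f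

/-- The term of the degree map attached to a facet `σ` with value `g` on `σ`:
`g/(χ_σ [σ]) = g·[σ]^{d-1}/∏_{v ∈ σ}[σ_v]`. -/
noncomputable def volTerm (σ : Finset V) (g : MvPolynomial (Fin d) K) : RatFun K d :=
  toF K d g * toF K d (C (obrack K d ε a σ)) ^ (d - 1) /
    ∏ v ∈ σ, toF K d (obrackVar K d ε a σ v)

/-- The degree map on piecewise polynomials `(g σ)_σ`. -/
noncomputable def VolPP (Δ : SComplex V) (g : Finset V → MvPolynomial (Fin d) K) :
    RatFun K d :=
  ∑ σ ∈ SComplex.facets Δ d, volTerm K d ε a σ (g σ)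

/-- The degree map on the Stanley–Reisner polynomial ring. -/
noncomputable def VolSR (Δ : SComplex V) (f : MvPolynomial V K) : RatFun K d :=
  ∑ σ ∈ SComplex.facets Δ d, restrictF K d ε a σ f * toF K d (C (obrack K d ε a σ)) ^ (d - 1) /
    ∏ v ∈ σ, toF K d (obrackVar K d ε a σ v)

end Orientation

section Deriv

variable {k K : Type*} [CommRing k] [CommRing K] [Algebra k K]

/-- The composite of a finite family of derivations, as a map. -/
def compApply {m : ℕ} (D : Fin m → Derivation k K K) : K → K :=
  (List.ofFn fun j => ⇑(D j)).foldr Function.comp id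

end Deriv
section Generic

/-- The field `k(a_x : x ∈ I)` of rational functions over `k` in
indeterminates indexed by `I`. -/
abbrev GField (k : Type*) [Field k] (I : Type*) : Type _ :=
  FractionRing (MvPolynomial I k)

/-- The indeterminate `a_x` as an element of `k(a)`. -/
noncomputable def gen (k : Type*) [Field k] {I : Type*} (x : I) : GField k I :=
  algebraMap (MvPolynomial I k) (GField k I) (X x)

/-- The generic coordinates `a_{vi}` of the vertices. -/
noncomputable def genCoord (k : Type*) [Field k] (V : Type*) (d : ℕ) (v : V)
    (i : Fin d) : GField k (V × Fin d) := gen k (v, i)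

/-- The generic linear system of parameters `ℓ_i = Σ_v a_{vi} x_v`. -/
noncomputable def genL (k : Type*) [Field k] (V : Type*) [Fintype V] (d : ℕ)
    (i : Fin d) : MvPolynomial V (GField k (V × Fin d)) :=
  ∑ v : V, C (genCoord k V d v i) * X v

/-- The ideal `I_Σ + (ℓ_1,…,ℓ_d)` defining the Artinian reduction
`A^*(Σ)` for the generic parameter space. -/
noncomputable def genJ (k : Type*) [Field k] {V : Type*} [DecidableEq V]
    [Fintype V] (d : ℕ) (Δ : SComplex V) :
    Ideal (MvPolynomial V (GField k (V × Fin d))) :=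
  SComplex.SRideal _ Δ ⊔ Ideal.span (Set.range (genL k V d))

end Generic

section DispAux

open MvPolynomial

variable {V : Type*} [DecidableEq V] [Fintype V] {K : Type*} [Field K]

lemma DispAux.prodX_eq_monomial (s : Finset V) :
    (∏ v ∈ s, (X v : MvPolynomial V K)) =
      monomial (∑ v ∈ s, Finsupp.single v 1) 1 := by
  induction s using Finset.cons_induction with
  | empty => simp
  | cons a s ha ih =>
      rw [Finset.prod_cons, Finset.sum_cons, ih]
      rw [show (X a : MvPolynomial V K) = monomial (Finsupp.single a 1) 1 from rfl,
        monomial_mul, one_mul]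

lemma DispAux.repr_of_mem_spanX {p : MvPolynomial V K}
    (hp : p ∈ Submodule.span K (Set.range (X : V → MvPolynomial V K))) :
    p = ∑ v : V, coeff (Finsupp.single v 1) p • X v := by
  induction hp using Submodule.span_induction with
  | mem x h =>
      obtain ⟨u, rfl⟩ := h
      rw [Finset.sum_eq_single u]
      · simp
      · intro w _ hw
        rw [coeff_X']
        rw [if_neg, zero_smul]
        intro hc
        exact hw (Finsupp.single_left_injective (one_ne_zero (α := ℕ)) hc).symm
      · intro h; exact absurd (Finset.mem_univ u) h
  | zero => simp
  | add x y hx hy ihx ihy =>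
      rw [Finset.sum_congr rfl fun v _ => by rw [coeff_add, add_smul]]
      rw [Finset.sum_add_distrib, ← ihx, ← ihy]
  | smul c x hx ihx =>
      rw [Finset.sum_congr rfl fun v _ => by
        rw [show coeff (Finsupp.single v 1) (c • x) = c * coeff (Finsupp.single v 1) x from
          coeff_smul _ _ _, mul_smul]]
      rw [← Finset.smul_sum, ← ihx]

lemma DispAux.exists_dual_elt (d : ℕ) (M : Submodule K (MvPolynomial V K))
    (hgen : LinGenericM K d M) (T : Finset V) (hT : T.card ≤ d)
    (v : V) (hv : v ∈ T) :
    ∃ ℓ ∈ M, coeff (Finsupp.single v 1) ℓ = 1 ∧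
      ∀ u ∈ T, u ≠ v → coeff (Finsupp.single u 1) ℓ = 0 := by
  haveI : FiniteDimensional K (Submodule.span K (Set.range (X : V → MvPolynomial V K))) :=
    FiniteDimensional.span_of_finite K (Set.finite_range _)
  haveI : FiniteDimensional K M := Submodule.finiteDimensional_of_le hgen.1
  set f : T → Module.Dual K M := fun u => (coeffLin K u.1).comp M.subtype with hf
  have hind : LinearIndependent K f := hgen.2.2 T hT
  let Φ : M →ₗ[K] (T → K) := LinearMap.pi f
  have hΦ : ∀ (x : M) (u : T), Φ x u = coeff (Finsupp.single u.1 1) (x : MvPolynomial V K) :=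
    fun x u => by rw [LinearMap.pi_apply]; rfl
  have hinj : Function.Injective Φ.dualMap := by
    rw [← LinearMap.ker_eq_bot, eq_bot_iff]
    intro g hg
    rw [LinearMap.mem_ker] at hg
    have hgΦ : ∀ x : M, g (Φ x) = 0 := fun x => by
      have := LinearMap.congr_fun hg x
      simpa using this
    let cg : T → K := fun u => g (Pi.single u (1 : K))
    have hcomb : ∑ u : T, cg u • f u = 0 := by
      apply LinearMap.ext
      intro x
      have h1 : Φ x = ∑ u : T, Pi.single u (f u x) := (Finset.univ_sum_single (Φ x)).symm
      have h2 : ∀ u : T, (Pi.single u (f u x) : T → K) = (f u x) • (Pi.single u (1 : K) : T → K) := by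
        intro u
        ext w
        by_cases h : w = u
        · subst h; simp
        · simp [Pi.single_eq_of_ne h]
      have h3 : g (Φ x) = ∑ u : T, (f u x) * cg u := by
        rw [h1, map_sum]
        refine Finset.sum_congr rfl fun u _ => ?_
        rw [h2, map_smul, smul_eq_mul]
      have h4 := hgΦ x
      rw [h3] at h4
      simp only [LinearMap.sum_apply, LinearMap.smul_apply, smul_eq_mul, LinearMap.zero_apply]
      rw [← h4]
      exact Finset.sum_congr rfl fun u _ => mul_comm _ _
    have key0 := Fintype.linearIndependent_iff.mp hind cg hcomb
    rw [Submodule.mem_bot]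
    refine (Pi.basisFun K T).ext fun i => ?_
    simp only [Pi.basisFun_apply, LinearMap.zero_apply]
    exact key0 i
  have hsurj := LinearMap.dualMap_injective_iff.mp hinj
  obtain ⟨x, hx⟩ := hsurj (Pi.single (⟨v, hv⟩ : T) (1 : K))
  refine ⟨x, x.2, ?_, ?_⟩
  · have h := congrFun hx (⟨v, hv⟩ : T)
    rw [hΦ] at h
    simpa using h
  · intro u hu hne
    have h := congrFun hx (⟨u, hu⟩ : T)
    rw [hΦ] at h
    rw [h, Pi.single_eq_of_ne]
    simpa [Subtype.ext_iff] using hne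

end DispAux


open SComplex in
/-- **Displacement Lemma.** For a normal pseudomanifold with a
linearly generic parameter subspace, every degree-`m` element of
`A^*(Σ) = K[Σ]/(M)` is a linear combination of squarefree monomials `x_η`
with `η` an `(m-1)`-face disjoint from a given `(d-m-1)`-face `γ`. -/
theorem displacement_lemma
    {V : Type*} [DecidableEq V] [Fintype V] (K : Type*) [Field K]
    (Δ : SComplex V) (d m : ℕ) (hm : m ≤ d) (hpm : IsNormalPM Δ d)
    (M : Submodule K (MvPolynomial V K)) (hgen : LinGenericM K d M)
    (γ : Finset V) (hγ : γ ∈ Δ.faces) (hγc : γ.card = d - m)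
    (p : MvPolynomial V K) (hp : p.IsHomogeneous m) :
    Ideal.Quotient.mk (SRideal K Δ ⊔ Ideal.span (M : Set (MvPolynomial V K))) p ∈
      Submodule.span K
        {y : MvPolynomial V K ⧸ (SRideal K Δ ⊔ Ideal.span (M : Set (MvPolynomial V K))) |
          ∃ η ∈ Δ.faces, η.card = m ∧ Disjoint η γ ∧
            y = Ideal.Quotient.mk (SRideal K Δ ⊔ Ideal.span (M : Set (MvPolynomial V K)))
              (∏ v ∈ η, X v)} := by
  classical
  set I : Ideal (MvPolynomial V K) :=
    SRideal K Δ ⊔ Ideal.span (M : Set (MvPolynomial V K)) with hI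
  set W : Submodule K (MvPolynomial V K ⧸ I) :=
    Submodule.span K
      {y : MvPolynomial V K ⧸ I |
        ∃ η ∈ Δ.faces, η.card = m ∧ Disjoint η γ ∧
          y = Ideal.Quotient.mk I (∏ v ∈ η, X v)} with hW
  have hmk_smul : ∀ (c : K) (q : MvPolynomial V K),
      Ideal.Quotient.mk I (c • q) = c • Ideal.Quotient.mk I q := by
    intro c q
    have h := map_smul (Ideal.Quotient.mkₐ K I) c q
    rwa [Ideal.Quotient.mkₐ_eq_mk] at h
  have happ : ∀ (x : V →₀ ℕ) (v w u : V),
      ((x - Finsupp.single v 1 + Finsupp.single w 1 : V →₀ ℕ)) u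
        = x u - (if v = u then 1 else 0) + (if w = u then 1 else 0) := by
    intro x v w u
    rw [Finsupp.add_apply, Finsupp.tsub_apply, Finsupp.single_apply, Finsupp.single_apply]
  have hsub : ∀ (x : V →₀ ℕ) (v : V), 1 ≤ x v →
      x - Finsupp.single v 1 + Finsupp.single v 1 = x := by
    intro x v hv
    ext u
    rw [Finsupp.add_apply, Finsupp.tsub_apply, Finsupp.single_apply]
    rcases eq_or_ne v u with rfl | h
    · rw [if_pos rfl]; omega
    · rw [if_neg h]; omega
  have hsingle_sum : ∀ v : V, (∑ u : V, (Finsupp.single v (1 : ℕ)) u) = 1 := by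
    intro v
    simp [Finsupp.single_apply]
  have hdegb : ∀ (a : V →₀ ℕ) (v w : V), 1 ≤ a v → (∑ u : V, a u) = m →
      (∑ u : V, ((a - Finsupp.single v 1 + Finsupp.single w 1 : V →₀ ℕ)) u) = m := by
    intro a v w hv hdeg
    have h1 : (∑ u : V, ((a - Finsupp.single v 1 : V →₀ ℕ)) u) + 1 = m := by
      have e1 : (∑ u : V, ((a - Finsupp.single v 1 : V →₀ ℕ)) u)
          + (∑ u : V, (Finsupp.single v (1 : ℕ)) u) = m := by
        rw [← Finset.sum_add_distrib, ← hdeg]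
        refine Finset.sum_congr rfl fun u _ => ?_
        rw [← Finsupp.add_apply, hsub a v hv]
      rwa [hsingle_sum v] at e1
    calc (∑ u : V, ((a - Finsupp.single v 1 + Finsupp.single w 1 : V →₀ ℕ)) u)
        = (∑ u : V, (((a - Finsupp.single v 1 : V →₀ ℕ)) u + (Finsupp.single w (1 : ℕ)) u)) := by
          refine Finset.sum_congr rfl fun u _ => Finsupp.add_apply _ _ _
      _ = (∑ u : V, ((a - Finsupp.single v 1 : V →₀ ℕ)) u) + (∑ u : V, (Finsupp.single w (1 : ℕ)) u) :=
          Finset.sum_add_distrib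
      _ = m := by rw [hsingle_sum w]; omega
  have step : ∀ (a : V →₀ ℕ) (v : V) (S : Finset V), 1 ≤ a v → v ∉ S → S.card + 1 ≤ d →
      (∀ w, w ∉ S → w ≠ v →
        Ideal.Quotient.mk I (monomial (a - Finsupp.single v 1 + Finsupp.single w 1) (1 : K)) ∈ W) →
      Ideal.Quotient.mk I (monomial a (1 : K)) ∈ W := by
    intro a v S hav hvS hScard hIH
    obtain ⟨ℓ, hℓM, hℓv, hℓ0⟩ := DispAux.exists_dual_elt d M hgen (insert v S)
      (by rw [Finset.card_insert_of_notMem hvS]; exact hScard) v (Finset.mem_insert_self v S)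
    have hrep : ℓ = ∑ w : V, coeff (Finsupp.single w 1) ℓ • X w :=
      DispAux.repr_of_mem_spanX (hgen.1 hℓM)
    have hexp : (monomial (a - Finsupp.single v 1) (1 : K)) * ℓ
        = ∑ w : V, coeff (Finsupp.single w 1) ℓ •
            monomial (a - Finsupp.single v 1 + Finsupp.single w 1) (1 : K) := by
      conv_lhs => rw [hrep]
      rw [Finset.mul_sum]
      refine Finset.sum_congr rfl fun w _ => ?_
      rw [mul_smul_comm]
      congr 1
      rw [show (X w : MvPolynomial V K) = monomial (Finsupp.single w 1) 1 from rfl, monomial_mul,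
        one_mul]
    have hℓI : ℓ ∈ I := by
      rw [hI]
      exact Submodule.mem_sup_right (Ideal.subset_span hℓM)
    have h0 : Ideal.Quotient.mk I ((monomial (a - Finsupp.single v 1) (1 : K)) * ℓ) = 0 :=
      Ideal.Quotient.eq_zero_iff_mem.mpr (Ideal.mul_mem_left _ _ hℓI)
    rw [hexp, map_sum] at h0
    simp_rw [hmk_smul] at h0
    rw [← Finset.add_sum_erase _ _ (Finset.mem_univ v)] at h0
    rw [hsub a v hav, hℓv, one_smul] at h0
    have hmain : Ideal.Quotient.mk I (monomial a (1 : K))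
        = -∑ w ∈ Finset.univ.erase v, coeff (Finsupp.single w 1) ℓ •
            Ideal.Quotient.mk I (monomial (a - Finsupp.single v 1 + Finsupp.single w 1) (1 : K)) :=
      eq_neg_of_add_eq_zero_left h0
    rw [hmain]
    refine Submodule.neg_mem _ (Submodule.sum_mem _ fun w hw => ?_)
    have hwv : w ≠ v := (Finset.mem_erase.mp hw).1
    by_cases hwS : w ∈ S
    · rw [hℓ0 w (Finset.mem_insert_of_mem hwS) hwv, zero_smul]
      exact Submodule.zero_mem _
    · exact Submodule.smul_mem _ _ (hIH w hwS hwv)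
  have key : ∀ (N : ℕ) (a : V →₀ ℕ), (∑ u : V, a u) = m →
      (m - a.support.card) * (d + 1) + (a.support ∩ γ).card ≤ N →
      Ideal.Quotient.mk I (monomial a (1 : K)) ∈ W := by
    intro N
    induction N using Nat.strong_induction_on with
    | _ N IH =>
    intro a hdeg hμ
    have hsum_supp : ∑ u ∈ a.support, a u = m := by
      rw [← hdeg]
      exact Finset.sum_subset (Finset.subset_univ _)
        (fun x _ hx => Finsupp.notMem_support_iff.mp hx)
    by_cases hface : a.support ∈ Δ.faces
    · have hcardle : a.support.card ≤ m := by
        have h := Finset.card_nsmul_le_sum a.support a 1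
          (fun x hx => Nat.one_le_iff_ne_zero.mpr (Finsupp.mem_support_iff.mp hx))
        rw [hsum_supp] at h
        simpa using h
      by_cases hcard : a.support.card = m
      · -- squarefree case
        have hone : ∀ u ∈ a.support, a u = 1 := by
          by_contra hcon
          push_neg at hcon
          obtain ⟨u, hu, hne⟩ := hcon
          have hlt : ∑ _x ∈ a.support, 1 < ∑ x ∈ a.support, a x := by
            refine Finset.sum_lt_sum (fun i hi => Nat.one_le_iff_ne_zero.mpr
              (Finsupp.mem_support_iff.mp hi)) ⟨u, hu, ?_⟩
            have := Finsupp.mem_support_iff.mp hu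
            omega
          rw [hsum_supp] at hlt
          simp only [Finset.sum_const, smul_eq_mul, mul_one] at hlt
          omega
        have ha_eq : a = ∑ u ∈ a.support, Finsupp.single u 1 := by
          ext u
          rw [Finsupp.finset_sum_apply]
          simp_rw [Finsupp.single_apply]
          rw [Finset.sum_ite_eq' a.support u fun _ => 1]
          by_cases hu : u ∈ a.support
          · rw [if_pos hu]; exact hone u hu
          · rw [if_neg hu]; exact Finsupp.notMem_support_iff.mp hu
        have hmono : monomial a (1 : K) = ∏ u ∈ a.support, X u := by
          rw [DispAux.prodX_eq_monomial, ← ha_eq]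
        by_cases hdisj : (a.support ∩ γ).card = 0
        · have hdis : Disjoint a.support γ :=
            Finset.disjoint_iff_inter_eq_empty.mpr (Finset.card_eq_zero.mp hdisj)
          rw [hW]
          exact Submodule.subset_span ⟨a.support, hface, hcard, hdis, by rw [hmono]⟩
        · -- displacement step
          obtain ⟨v, hvmem⟩ := Finset.card_pos.mp (Nat.pos_of_ne_zero hdisj)
          have hva : v ∈ a.support := (Finset.mem_inter.mp hvmem).1
          have hvγ : v ∈ γ := (Finset.mem_inter.mp hvmem).2
          have hav1 : a v = 1 := hone v hva
          set S : Finset V := (a.support.erase v) ∪ (γ.erase v) with hS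
          have hvS : v ∉ S := by simp [hS]
          have hm1 : 1 ≤ m := by
            rw [← hcard]
            exact Finset.card_pos.mpr ⟨v, hva⟩
          have hdm1 : 1 ≤ d - m := by
            rw [← hγc]
            exact Finset.card_pos.mpr ⟨v, hvγ⟩
          have hScard : S.card + 1 ≤ d := by
            have h1 : S.card ≤ (a.support.erase v).card + (γ.erase v).card := by
              rw [hS]; exact Finset.card_union_le _ _
            have h2 : (a.support.erase v).card + 1 = m := by
              rw [Finset.card_erase_of_mem hva, hcard]; omega
            have h3 : (γ.erase v).card + 1 = d - m := by
              rw [Finset.card_erase_of_mem hvγ, hγc]; omega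
            omega
          refine step a v S (by omega) hvS hScard ?_
          intro w hwS hwv
          have hwsupp : w ∉ a.support := fun hmem =>
            hwS (Finset.mem_union_left _ (Finset.mem_erase.mpr ⟨hwv, hmem⟩))
          have hwγ : w ∉ γ := fun hmem =>
            hwS (Finset.mem_union_right _ (Finset.mem_erase.mpr ⟨hwv, hmem⟩))
          have haw : a w = 0 := Finsupp.notMem_support_iff.mp hwsupp
          set b : V →₀ ℕ := a - Finsupp.single v 1 + Finsupp.single w 1 with hb
          have hbval : ∀ u, b u = a u - (if v = u then 1 else 0) + (if w = u then 1 else 0) :=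
            fun u => by rw [hb]; exact happ a v w u
          have hbsupp : b.support = insert w (a.support.erase v) := by
            ext u
            rw [Finsupp.mem_support_iff, hbval u, Finset.mem_insert, Finset.mem_erase,
              Finsupp.mem_support_iff]
            rcases eq_or_ne v u with rfl | h1
            · rw [if_pos rfl, if_neg (show ¬ w = v from hwv)]
              constructor
              · intro hcon; exfalso; omega
              · rintro (hvw | ⟨hne, _⟩)
                · exact absurd hvw.symm hwv
                · exact absurd rfl hne
            · rcases eq_or_ne w u with rfl | h2
              · rw [if_neg h1, if_pos rfl]
                constructor
                · intro _; exact Or.inl rfl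
                · intro _; omega
              · rw [if_neg h1, if_neg h2]
                constructor
                · intro hcon
                  exact Or.inr ⟨Ne.symm h1, by omega⟩
                · rintro (hc | ⟨_, hne⟩)
                  · exact absurd hc.symm h2
                  · omega
          have hwnotin : w ∉ a.support.erase v := fun h => hwsupp (Finset.mem_erase.mp h).2
          have hbcard : b.support.card = m := by
            rw [hbsupp, Finset.card_insert_of_notMem hwnotin, Finset.card_erase_of_mem hva,
              hcard]
            omega
          have hbint : (b.support ∩ γ).card = (a.support ∩ γ).card - 1 := by
            rw [hbsupp, Finset.insert_inter_of_notMem hwγ, Finset.erase_inter,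
              Finset.card_erase_of_mem hvmem]
          have hdegb' := hdegb a v w (by omega) hdeg
          have htpos : 1 ≤ (a.support ∩ γ).card := Nat.pos_of_ne_zero hdisj
          have hzero : m - a.support.card = 0 := by omega
          rw [hzero, zero_mul, zero_add] at hμ
          refine IH (N - 1) (by omega) b hdegb' ?_
          rw [hbcard, hbint, Nat.sub_self, zero_mul, zero_add]
          omega
      · -- non-squarefree case
        have hlt : a.support.card < m := lt_of_le_of_ne hcardle hcard
        have hex : ∃ v ∈ a.support, 2 ≤ a v := by
          by_contra hcon
          push_neg at hcon
          have hle : ∑ u ∈ a.support, a u ≤ ∑ _u ∈ a.support, 1 :=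
            Finset.sum_le_sum (fun u hu => by
              have h1 := Finsupp.mem_support_iff.mp hu
              have h2 := hcon u hu
              omega)
          rw [hsum_supp] at hle
          simp only [Finset.sum_const, smul_eq_mul, mul_one] at hle
          omega
        obtain ⟨v, hva, hv2⟩ := hex
        have hcpos : 0 < a.support.card := Finset.card_pos.mpr ⟨v, hva⟩
        set S : Finset V := a.support.erase v with hS
        have hvS : v ∉ S := Finset.notMem_erase v _
        have hScard : S.card + 1 ≤ d := by
          rw [hS, Finset.card_erase_of_mem hva]
          omega
        refine step a v S (by omega) hvS hScard ?_
        intro w hwS hwv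
        have hwsupp : w ∉ a.support := fun h => hwS (by rw [hS]; exact Finset.mem_erase.mpr ⟨hwv, h⟩)
        have haw : a w = 0 := Finsupp.notMem_support_iff.mp hwsupp
        set b : V →₀ ℕ := a - Finsupp.single v 1 + Finsupp.single w 1 with hb
        have hbval : ∀ u, b u = a u - (if v = u then 1 else 0) + (if w = u then 1 else 0) :=
          fun u => by rw [hb]; exact happ a v w u
        have hbsupp : b.support = insert w a.support := by
          ext u
          rw [Finsupp.mem_support_iff, hbval u, Finset.mem_insert, Finsupp.mem_support_iff]
          rcases eq_or_ne v u with rfl | h1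
          · rw [if_pos rfl, if_neg (show ¬ w = v from hwv)]
            constructor
            · intro _; exact Or.inr (by omega)
            · intro _; omega
          · rcases eq_or_ne w u with rfl | h2
            · rw [if_neg h1, if_pos rfl]
              constructor
              · intro _; exact Or.inl rfl
              · intro _; omega
            · rw [if_neg h1, if_neg h2]
              constructor
              · intro hcon; exact Or.inr (by omega)
              · rintro (hc | hne)
                · exact absurd hc.symm h2
                · omega
        have hbcard : b.support.card = a.support.card + 1 := by
          rw [hbsupp, Finset.card_insert_of_notMem hwsupp]
        have hdegb' := hdegb a v w (by omega) hdeg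
        have hintb : (b.support ∩ γ).card ≤ d :=
          le_trans (le_trans (Finset.card_le_card Finset.inter_subset_right) (le_of_eq hγc))
            (Nat.sub_le d m)
        have hmul : (m - a.support.card) * (d + 1)
            = (m - (a.support.card + 1)) * (d + 1) + (d + 1) := by
          rw [show m - a.support.card = (m - (a.support.card + 1)) + 1 from by omega,
            add_mul, one_mul]
        refine IH (N - 1) ?_ b hdegb' ?_
        · generalize hP1 : (m - a.support.card) * (d + 1) = P1 at hμ hmul
          generalize hP2 : (m - (a.support.card + 1)) * (d + 1) = P2 at hmul
          omega
        · rw [hbcard]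
          generalize hP1 : (m - a.support.card) * (d + 1) = P1 at hμ hmul
          generalize hP2 : (m - (a.support.card + 1)) * (d + 1) = P2 at hmul ⊢
          omega
    · -- support is not a face
      have hind_app : ∀ u, (∑ x ∈ a.support, Finsupp.single x (1 : ℕ)) u
          = if u ∈ a.support then 1 else 0 := by
        intro u
        rw [Finsupp.finset_sum_apply]
        simp_rw [Finsupp.single_apply]
        rw [Finset.sum_ite_eq' a.support u fun _ => 1]
      have hsplit : a = (∑ u ∈ a.support, Finsupp.single u 1)
          + (a - ∑ u ∈ a.support, Finsupp.single u 1) := by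
        ext u
        rw [Finsupp.add_apply, Finsupp.tsub_apply, hind_app u]
        by_cases hu : u ∈ a.support
        · have := Finsupp.mem_support_iff.mp hu
          rw [if_pos hu]
          omega
        · rw [if_neg hu]
          omega
      have hmem : monomial a (1 : K) ∈ I := by
        have hprod : (∏ u ∈ a.support, (X u : MvPolynomial V K)) ∈ SRideal K Δ :=
          Ideal.subset_span ⟨a.support, hface, rfl⟩
        have heq : monomial a (1 : K) = (∏ u ∈ a.support, X u)
            * monomial (a - ∑ u ∈ a.support, Finsupp.single u 1) 1 := by
          rw [DispAux.prodX_eq_monomial, monomial_mul, one_mul, ← hsplit]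
        rw [hI, heq]
        exact Submodule.mem_sup_left (Ideal.mul_mem_right _ _ hprod)
      rw [Ideal.Quotient.eq_zero_iff_mem.mpr hmem]
      exact Submodule.zero_mem _
  rw [← support_sum_monomial_coeff p, map_sum]
  refine Submodule.sum_mem _ fun a ha => ?_
  have hdeg : ∑ u : V, a u = m := by
    have h1 : ∑ u ∈ a.support, a u = m := by
      have h2 := hp (MvPolynomial.mem_support_iff.mp ha)
      rw [← h2, Finsupp.weight_apply, Finsupp.sum]
      refine Finset.sum_congr rfl fun u _ => ?_
      simp
    rw [← h1]
    exact (Finset.sum_subset (Finset.subset_univ _)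
      (fun x _ hx => Finsupp.notMem_support_iff.mp hx)).symm
  have hmono : monomial a (coeff a p) = (coeff a p) • monomial a (1 : K) := by
    rw [smul_monomial, smul_eq_mul, mul_one]
  rw [hmono, hmk_smul]
  exact Submodule.smul_mem _ _
    (key ((m - a.support.card) * (d + 1) + (a.support ∩ γ).card) a hdeg le_rfl)
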